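/- Assume the fiberwise zero-mean condition and that W(f) > 0 for every f ∈ F, and let b*(f) = U(f)/W(f) be the optimal action-dependent baseline. Then for every baseline b : F → ℝ, Var[g(b)] − Var[g(b*)] = ∑_{f ∈ F} (b(f) − b*(f))² · W(f). -/

import Mathlib

open Finset

lemma mean_indep {Ω : Type*} [Fintype Ω]
    {E : Type*} [NormedAddCommGroup E] [InnerProductSpace ℝ E]
    {F : Type*} [Fintype F] [DecidableEq F]
    (p : Ω → ℝ) (z : Ω → E) (Q : Ω → ℝ) (φ : Ω → F)
    (hzm : ∀ f : F, ∑ ω ∈ univ.filter (fun ω => φ ω = f), p ω • z ω = 0)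
    (b : F → ℝ) :
    ∑ ω, p ω • ((Q ω - b (φ ω)) • z ω) = ∑ ω, p ω • (Q ω • z ω) := by
  have h0 : ∑ ω, p ω • (b (φ ω) • z ω) = 0 := by
    have : ∑ ω, p ω • (b (φ ω) • z ω)
        = ∑ f, ∑ ω ∈ univ.filter (fun ω => φ ω = f), p ω • (b (φ ω) • z ω) :=
      (Finset.sum_fiberwise univ φ _).symm
    rw [this]
    refine Finset.sum_eq_zero fun f _ => ?_
    have : ∑ ω ∈ univ.filter (fun ω => φ ω = f), p ω • (b (φ ω) • z ω)
        = b f • ∑ ω ∈ univ.filter (fun ω => φ ω = f), p ω • z ω := by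
      rw [Finset.smul_sum]
      refine Finset.sum_congr rfl fun ω hω => ?_
      simp only [Finset.mem_filter] at hω
      rw [hω.2, smul_comm]
    rw [this, hzm f, smul_zero]
  calc ∑ ω, p ω • ((Q ω - b (φ ω)) • z ω)
      = ∑ ω, (p ω • (Q ω • z ω) - p ω • (b (φ ω) • z ω)) := by
        refine Finset.sum_congr rfl fun ω _ => ?_
        rw [sub_smul, smul_sub]
    _ = ∑ ω, p ω • (Q ω • z ω) - ∑ ω, p ω • (b (φ ω) • z ω) := Finset.sum_sub_distrib _ _
    _ = ∑ ω, p ω • (Q ω • z ω) := by rw [h0, sub_zero]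

/-- Lemma 1: for any baseline `b`, the excess variance over the optimal
action-dependent baseline `b*(f) = U(f)/W(f)` is
`Var[g(b)] − Var[g(b*)] = ∑ f, (b(f) − b*(f))² W(f)`. -/
theorem offpolicy_excess_variance_over_optimal_baseline
    {Ω : Type*} [Fintype Ω] [Nonempty Ω]
    {E : Type*} [NormedAddCommGroup E] [InnerProductSpace ℝ E] [FiniteDimensional ℝ E]
    {F : Type*} [Fintype F] [DecidableEq F]
    (p : Ω → ℝ) (hp0 : ∀ ω, 0 ≤ p ω) (hp1 : ∑ ω, p ω = 1)
    (z : Ω → E) (Q : Ω → ℝ) (φ : Ω → F)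
    (hzm : ∀ f : F, ∑ ω ∈ univ.filter (fun ω => φ ω = f), p ω • z ω = 0)
    (W U : F → ℝ)
    (hW : ∀ f, W f = ∑ ω ∈ univ.filter (fun ω => φ ω = f), p ω * ‖z ω‖ ^ 2)
    (hU : ∀ f, U f = ∑ ω ∈ univ.filter (fun ω => φ ω = f), p ω * ‖z ω‖ ^ 2 * Q ω)
    (hWpos : ∀ f, 0 < W f)
    (bstar : F → ℝ) (hbstar : ∀ f, bstar f = U f / W f) :
    ∀ b : F → ℝ,
      ((∑ ω, p ω * ‖(Q ω - b (φ ω)) • z ω‖ ^ 2)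
          - ‖∑ ω, p ω • ((Q ω - b (φ ω)) • z ω)‖ ^ 2)
        - ((∑ ω, p ω * ‖(Q ω - bstar (φ ω)) • z ω‖ ^ 2)
          - ‖∑ ω, p ω • ((Q ω - bstar (φ ω)) • z ω)‖ ^ 2)
      = ∑ f, (b f - bstar f) ^ 2 * W f := by
  intro b
  have hmean : ∀ c : F → ℝ,
      ∑ ω, p ω • ((Q ω - c (φ ω)) • z ω) = ∑ ω, p ω • (Q ω • z ω) :=
    fun c => mean_indep p z Q φ hzm c
  rw [hmean b, hmean bstar]
  have hsec : ∀ c : F → ℝ, ∑ ω, p ω * ‖(Q ω - c (φ ω)) • z ω‖ ^ 2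
      = ∑ f, ∑ ω ∈ univ.filter (fun ω => φ ω = f),
          p ω * ‖z ω‖ ^ 2 * (Q ω - c f) ^ 2 := by
    intro c
    rw [← Finset.sum_fiberwise univ φ (fun ω => p ω * ‖(Q ω - c (φ ω)) • z ω‖ ^ 2)]
    refine Finset.sum_congr rfl fun f _ => Finset.sum_congr rfl fun ω hω => ?_
    simp only [Finset.mem_filter] at hω
    rw [hω.2, norm_smul, mul_pow, Real.norm_eq_abs, sq_abs]
    ring
  rw [hsec b, hsec bstar]
  have key : ∀ f, (∑ ω ∈ univ.filter (fun ω => φ ω = f),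
        p ω * ‖z ω‖ ^ 2 * (Q ω - b f) ^ 2)
      - (∑ ω ∈ univ.filter (fun ω => φ ω = f),
        p ω * ‖z ω‖ ^ 2 * (Q ω - bstar f) ^ 2)
      = (b f - bstar f) ^ 2 * W f := by
    intro f
    have hUW : U f = bstar f * W f := by
      rw [hbstar f, div_mul_cancel₀ _ (hWpos f).ne']
    have expand : ∀ c : ℝ, (∑ ω ∈ univ.filter (fun ω => φ ω = f),
          p ω * ‖z ω‖ ^ 2 * (Q ω - c) ^ 2)
        = (∑ ω ∈ univ.filter (fun ω => φ ω = f), p ω * ‖z ω‖ ^ 2 * Q ω ^ 2)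
          - 2 * c * U f + c ^ 2 * W f := by
      intro c
      rw [hU, hW, Finset.mul_sum, Finset.mul_sum, ← Finset.sum_sub_distrib,
        ← Finset.sum_add_distrib]
      refine Finset.sum_congr rfl fun ω _ => ?_
      ring
    rw [expand, expand, hUW]
    ring
  rw [sub_sub_sub_cancel_right, ← Finset.sum_sub_distrib]
  exact Finset.sum_congr rfl fun f _ => key f
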